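/- The (n−1)-dimensional volume of the parallelepiped (generalized rhombohedron) spanned by the vectors k_1 = ω_1 − ω_2, k_2 = ω_2 − ω_3, …, k_{n−1} = ω_{n−1} − ω_n equals √(2/(n+1)). -/

import Mathlib

/-- Fundamental weight `ω_i` of `A_n` in `ℝ^{n+1}`. -/
noncomputable def omegaA (n : ℕ) (i : ℕ) : EuclideanSpace ℝ (Fin (n + 1)) :=
  WithLp.toLp 2 (fun j : Fin (n + 1) => if (j : ℕ) < i then ((n : ℝ) + 1 - (i : ℝ)) / ((n : ℝ) + 1)
           else -(i : ℝ) / ((n : ℝ) + 1))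

lemma omegaA_entry (n : ℕ) (a j : Fin (n+1)) :
    (omegaA n a - omegaA n ((a:ℕ)+1)) j
      = 1/((n:ℝ)+1) - (if j = a then 1 else 0) := by
  have hpos : ((n:ℝ)+1) ≠ 0 := by positivity
  have hsub : (omegaA n a - omegaA n ((a:ℕ)+1)) j
      = omegaA n a j - omegaA n ((a:ℕ)+1) j := rfl
  rw [hsub]
  unfold omegaA
  simp only [WithLp.ofLp_toLp]
  rcases lt_trichotomy (j:ℕ) (a:ℕ) with h | h | h
  · rw [if_pos h, if_pos (by omega), if_neg (by simp [Fin.ext_iff]; omega)]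
    push_cast
    ring
  · rw [if_neg (by omega), if_pos (by omega), if_pos (by simp [Fin.ext_iff, h])]
    push_cast
    field_simp
    ring
  · rw [if_neg (by omega), if_neg (by omega), if_neg (by simp [Fin.ext_iff]; omega)]
    push_cast
    ring

lemma gramA (n : ℕ) (a b : Fin (n+1)) :
    (inner ℝ (omegaA n a - omegaA n ((a:ℕ)+1)) (omegaA n b - omegaA n ((b:ℕ)+1)) : ℝ)
      = (if a = b then 1 else 0) - 1/((n:ℝ)+1) := by
  have hpos : ((n:ℝ)+1) ≠ 0 := by positivity
  rw [PiLp.inner_apply]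
  simp only [RCLike.inner_apply, conj_trivial, omegaA_entry]
  simp only [sub_mul, mul_sub, ite_mul, mul_ite, one_mul, mul_one, zero_mul, mul_zero,
    Finset.sum_sub_distrib, Finset.sum_const, Finset.sum_ite_eq, Finset.sum_ite_eq',
    Finset.mem_univ, if_true, Finset.card_univ, Fintype.card_fin, nsmul_eq_mul]
  rcases eq_or_ne a b with h | h
  · simp only [h, if_pos rfl]
    push_cast
    field_simp
    ring
  · rw [if_neg h]
    push_cast
    field_simp
    ring

/-- The `(n-1)`-dimensional volume (square root of the Gram determinant) of the
parallelepiped spanned by `k_1 = ω_1 - ω_2, …, k_{n-1} = ω_{n-1} - ω_n` equals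
`√(2/(n+1))`. -/
theorem volume_rhombohedronA (n : ℕ) (hn : 2 ≤ n) :
    Real.sqrt (Matrix.det (Matrix.of fun i j : Fin (n - 1) =>
      (inner ℝ (omegaA n ((i : ℕ) + 1) - omegaA n ((i : ℕ) + 2))
             (omegaA n ((j : ℕ) + 1) - omegaA n ((j : ℕ) + 2)) : ℝ)))
    = Real.sqrt (2 / ((n : ℝ) + 1)) := by
  have hpos : ((n:ℝ)+1) ≠ 0 := by positivity
  have key : ∀ i j : Fin (n-1),
      (inner ℝ (omegaA n ((i : ℕ) + 1) - omegaA n ((i : ℕ) + 2))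
             (omegaA n ((j : ℕ) + 1) - omegaA n ((j : ℕ) + 2)) : ℝ)
        = (if i = j then 1 else 0) - 1/((n:ℝ)+1) := by
    intro i j
    have hi : (i:ℕ)+1 < n+1 := by omega
    have hj : (j:ℕ)+1 < n+1 := by omega
    have h := gramA n ⟨(i:ℕ)+1, hi⟩ ⟨(j:ℕ)+1, hj⟩
    simp only [Fin.mk.injEq, add_left_inj] at h
    rw [show ((i:ℕ)+2) = (((⟨(i:ℕ)+1, hi⟩ : Fin (n+1)) : ℕ)+1) from rfl,
      show ((j:ℕ)+2) = (((⟨(j:ℕ)+1, hj⟩ : Fin (n+1)) : ℕ)+1) from rfl]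
    rw [h]
    congr 1
    simp [Fin.val_inj]
  have hM : (Matrix.of fun i j : Fin (n - 1) =>
      (inner ℝ (omegaA n ((i : ℕ) + 1) - omegaA n ((i : ℕ) + 2))
             (omegaA n ((j : ℕ) + 1) - omegaA n ((j : ℕ) + 2)) : ℝ))
      = (1 : Matrix (Fin (n-1)) (Fin (n-1)) ℝ)
        + Matrix.replicateCol Unit (fun _ : Fin (n-1) => -(1/((n:ℝ)+1))) * Matrix.replicateRow Unit (fun _ : Fin (n-1) => (1:ℝ)) := by
    ext i j
    rw [Matrix.of_apply, key i j]
    simp [Matrix.one_apply, Matrix.mul_apply, sub_eq_add_neg, one_div]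
  rw [hM, Matrix.det_one_add_replicateCol_mul_replicateRow]
  congr 1
  simp only [dotProduct, one_mul, Finset.sum_const, Finset.card_univ, Fintype.card_fin,
    nsmul_eq_mul]
  have hc : ((n-1 : ℕ) : ℝ) = (n:ℝ) - 1 := by
    have : 1 ≤ n := by omega
    push_cast [this]
    ring
  rw [hc]
  field_simp
  ring
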